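/- Berezin integral representation: for a tensor M with mk indices over {1,...,mn} (mk even), the n-th power of the Grassmann element Ω_m(M) satisfies (1/n!) ∫ dη^(1)_{1..mn} ··· dη^(k)_{1..mn} Ω_m(M)^n = Pf_m(M), where Ω_m(M) = Σ M_{i_1...i_{mk}} η^(1)_{i_1}···η^(1)_{i_m} ··· η^(k)_{i_{(k-1)m+1}}···η^(k)_{i_{km}}, summed over block-increasing index tuples. -/

import Mathlib

open Equiv Finset Function

/-- The `r`-th element of the `i`-th block of length `m` in `{0, …, m*n-1}`. -/
def idx (m n : ℕ) (i : Fin n) (r : Fin m) : Fin (m * n) :=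
  ⟨i.val * m + r.val, by
    have h1 : i.val * m + m = (i.val + 1) * m := by ring
    have h2 : (i.val + 1) * m ≤ n * m := Nat.mul_le_mul_right m i.isLt
    have h3 : n * m = m * n := Nat.mul_comm n m
    omega⟩

/-- A permutation of `{0, …, m*n-1}` is block-increasing if it is strictly increasing on
each of the `n` consecutive blocks of length `m`. -/
def BlockIncr (m n : ℕ) (σ : Equiv.Perm (Fin (m * n))) : Prop :=
  ∀ (i : Fin n) (r r' : Fin m), r < r' → σ (idx m n i r) < σ (idx m n i r')

instance (m n : ℕ) : DecidablePred (BlockIncr m n) := fun σ => by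
  unfold BlockIncr; infer_instance

/-- The generalized pfaffian `Pf_m` of a tensor with `m*k` indices (grouped in `k` groups of
`m`), each ranging over `{0, …, m*n-1}`:
`(1/n!) Σ ε(σ_1)⋯ε(σ_k) Π_{i=1}^n M_{σ_1((i-1)m+1),…,σ_1(im),…,σ_k((i-1)m+1),…,σ_k(im)}`,
the sum being over `k`-tuples of block-increasing permutations. -/
noncomputable def Pf (m k n : ℕ) (M : (Fin k → Fin m → Fin (m * n)) → ℚ) : ℚ :=
  (n.factorial : ℚ)⁻¹ *
    ∑ σ ∈ Finset.univ.filter (fun σ : Fin k → Equiv.Perm (Fin (m * n)) =>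
        ∀ j, BlockIncr m n (σ j)),
      (∏ j, ((Equiv.Perm.sign (σ j) : ℤ) : ℚ)) *
        ∏ i : Fin n, M (fun j r => σ j (idx m n i r))

/-- Lexicographic comparison of Grassmann generators `η^(j)_i ↔ (j, i)`: family-major. -/
def GenLt {a b : ℕ} (p q : Fin a × Fin b) : Prop :=
  p.1 < q.1 ∨ (p.1 = q.1 ∧ p.2 < q.2)

instance {a b : ℕ} (p q : Fin a × Fin b) : Decidable (GenLt p q) := by
  unfold GenLt; infer_instance

/-- The sign produced when merging the ordered Grassmann monomial over `A` with the one
over `B` (for `A`, `B` disjoint): `(-1)` to the number of inversions. -/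
def gsign {a b : ℕ} (A B : Finset (Fin a × Fin b)) : ℚ :=
  (-1 : ℚ) ^ ((A ×ˢ B).filter (fun pq => GenLt pq.2 pq.1)).card

/-- Multiplication in the Grassmann algebra with generators indexed by `Fin a × Fin b`,
elements being represented by their coordinates on the basis of ordered monomials
indexed by `Finset (Fin a × Fin b)`. -/
def gmul {a b : ℕ} (x y : Finset (Fin a × Fin b) → ℚ) : Finset (Fin a × Fin b) → ℚ :=
  fun S => ∑ A ∈ S.powerset, gsign A (S \ A) * x A * y (S \ A)

/-- Powers in the Grassmann algebra. -/
def gpow {a b : ℕ} (x : Finset (Fin a × Fin b) → ℚ) : ℕ → Finset (Fin a × Fin b) → ℚ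
  | 0 => fun S => if S = ∅ then 1 else 0
  | ℓ + 1 => gmul x (gpow x ℓ)

/-- The Grassmann element `Ω_m(M) = Σ M_{i_1…i_{mk}} η^(1)_{i_1}⋯η^(1)_{i_m} ⋯
η^(k)_{i_{(k-1)m+1}}⋯η^(k)_{i_{km}}`, summed over block-increasing index tuples;
generator `η^(j)_i` is `(j, i)`. -/
def Omega (m k n : ℕ) (M : (Fin k → Fin m → Fin (m * n)) → ℚ) :
    Finset (Fin k × Fin (m * n)) → ℚ := fun S =>
  ∑ f ∈ Finset.univ.filter (fun f : Fin k → Fin m → Fin (m * n) => ∀ j, StrictMono (f j)),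
    if S = Finset.image (fun p : Fin k × Fin m => (p.1, f p.1 p.2)) Finset.univ then M f
    else 0

/-! ### Auxiliary lemmas -/

section Aux

lemma idx_val (m n : ℕ) (i : Fin n) (r : Fin m) : (idx m n i r).val = i.val * m + r.val := rfl

lemma idx_inj {m n : ℕ} {i i' : Fin n} {r r' : Fin m} (h : idx m n i r = idx m n i' r') :
    i = i' ∧ r = r' := by
  have h' : i.val * m + r.val = i'.val * m + r'.val := congrArg Fin.val h
  have hr := r.isLt
  have hr' := r'.isLt
  have hii : i.val = i'.val := by
    rcases Nat.lt_trichotomy i.val i'.val with hlt | heq | hgt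
    · have : i.val * m + m ≤ i'.val * m := by
        calc i.val * m + m = (i.val + 1) * m := by ring
        _ ≤ i'.val * m := Nat.mul_le_mul_right m hlt
      omega
    · exact heq
    · have : i'.val * m + m ≤ i.val * m := by
        calc i'.val * m + m = (i'.val + 1) * m := by ring
        _ ≤ i.val * m := Nat.mul_le_mul_right m hgt
      omega
  rw [hii] at h'
  refine ⟨Fin.ext hii, Fin.ext ?_⟩
  omega

lemma idx_lt {m n : ℕ} {i i' : Fin n} (r r' : Fin m) (h : i < i') :
    idx m n i r < idx m n i' r' := by
  have hr := r.isLt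
  have h2 : i.val * m + m ≤ i'.val * m := by
    calc i.val * m + m = (i.val + 1) * m := by ring
    _ ≤ i'.val * m := Nat.mul_le_mul_right m h
  have : (idx m n i r).val < (idx m n i' r').val := by
    rw [idx_val, idx_val]; omega
  exact this

lemma m_pos_of_mem {m n : ℕ} (t : Fin (m * n)) : 0 < m := by
  rcases Nat.eq_zero_or_pos m with h | h
  · exact absurd t.isLt (by simp [h])
  · exact h

lemma idx_surj {m n : ℕ} (t : Fin (m * n)) : ∃ i r, idx m n i r = t := by
  have hm : 0 < m := m_pos_of_mem t
  refine ⟨⟨t.val / m, ?_⟩, ⟨t.val % m, Nat.mod_lt _ hm⟩, ?_⟩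
  · rw [Nat.div_lt_iff_lt_mul hm, Nat.mul_comm n m]
    exact t.isLt
  · apply Fin.ext
    rw [idx_val]
    exact Nat.div_add_mod' t.val m

lemma idx_div {m n : ℕ} (i : Fin n) (r : Fin m) : (idx m n i r).val / m = i.val := by
  have hm : 0 < m := r.pos
  rw [idx_val, Nat.mul_comm, Nat.mul_add_div hm, Nat.div_eq_of_lt r.isLt, Nat.add_zero]

lemma idx_mod {m n : ℕ} (i : Fin n) (r : Fin m) : (idx m n i r).val % m = r.val := by
  rw [idx_val, Nat.mul_comm, Nat.mul_add_mod, Nat.mod_eq_of_lt r.isLt]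

/-- The elementary sign factor. -/
def eps {a b : ℕ} (p q : Fin a × Fin b) : ℚ := if GenLt q p then -1 else 1

lemma gsign_eq_prod {a b : ℕ} (A B : Finset (Fin a × Fin b)) :
    gsign A B = ∏ p ∈ A, ∏ q ∈ B, eps p q := by
  rw [← Finset.prod_product']
  unfold gsign eps
  rw [Finset.prod_ite, Finset.prod_const, Finset.prod_const, one_pow, mul_one]

lemma gsign_biUnion {a b : ℕ} {ι : Type*} [DecidableEq ι] (A : Finset (Fin a × Fin b))
    (s : Finset ι) (t : ι → Finset (Fin a × Fin b))
    (h : (s : Set ι).PairwiseDisjoint t) :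
    gsign A (s.biUnion t) = ∏ i ∈ s, gsign A (t i) := by
  simp only [gsign_eq_prod]
  calc ∏ p ∈ A, ∏ q ∈ s.biUnion t, eps p q
      = ∏ p ∈ A, ∏ i ∈ s, ∏ q ∈ t i, eps p q :=
        Finset.prod_congr rfl fun p _ => Finset.prod_biUnion (f := eps p) h
    _ = ∏ i ∈ s, ∏ p ∈ A, ∏ q ∈ t i, eps p q := Finset.prod_comm

lemma sign_eq_signAux {N : ℕ} (τ : Equiv.Perm (Fin N)) :
    Equiv.Perm.sign τ = Equiv.Perm.signAux τ := by
  obtain ⟨l, hl, hsw⟩ := (Equiv.Perm.truncSwapFactors τ).out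
  rw [← hl]
  clear hl
  induction l with
  | nil => simp [Equiv.Perm.signAux_one]
  | cons g l ih =>
      have hg : g.IsSwap := hsw g List.mem_cons_self
      obtain ⟨x, y, hxy, rfl⟩ := hg
      rw [List.prod_cons, map_mul, Equiv.Perm.signAux_mul,
        ih (fun g hg => hsw g (List.mem_cons_of_mem _ hg)),
        Equiv.Perm.sign_swap hxy, Equiv.Perm.signAux_swap hxy]

lemma sign_eq_prodQ {N : ℕ} (τ : Equiv.Perm (Fin N)) :
    ((Equiv.Perm.sign τ : ℤ) : ℚ) =
      ∏ x ∈ Equiv.Perm.finPairsLT N, (if τ x.1 ≤ τ x.2 then (-1 : ℚ) else 1) := by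
  rw [sign_eq_signAux]
  unfold Equiv.Perm.signAux
  rw [Finset.prod_ite, Finset.prod_const, Finset.prod_const,
    Finset.prod_ite, Finset.prod_const, Finset.prod_const]
  push_cast
  norm_num

/-- The set of generators occurring in the monomial of `f`. -/
def Tset (m k n : ℕ) (f : Fin k → Fin m → Fin (m * n)) : Finset (Fin k × Fin (m * n)) :=
  Finset.image (fun p : Fin k × Fin m => (p.1, f p.1 p.2)) Finset.univ

/-- The total merge-sign of an ordered sequence of monomial supports. -/
def tailSign {a b ℓ : ℕ} (A : Fin ℓ → Finset (Fin a × Fin b)) : ℚ :=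
  ∏ i, gsign (A i) ((Finset.univ.filter (fun i' => i < i')).biUnion A)

set_option maxHeartbeats 1000000 in
lemma tailSign_cons {a b ℓ : ℕ} (c : Finset (Fin a × Fin b))
    (A : Fin ℓ → Finset (Fin a × Fin b)) :
    tailSign (Fin.cons c A) = gsign c (Finset.univ.biUnion A) * tailSign A := by
  unfold tailSign
  rw [Fin.prod_univ_succ]
  congr 1
  · congr 1
    ext q
    simp only [Finset.mem_biUnion, Finset.mem_filter, Finset.mem_univ, true_and]
    constructor
    · rintro ⟨i', h0, hq⟩
      rcases Fin.eq_zero_or_eq_succ i' with rfl | ⟨j, rfl⟩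
      · exact absurd h0 (lt_irrefl _)
      · exact ⟨j, by simpa using hq⟩
    · rintro ⟨j, hq⟩
      exact ⟨j.succ, Fin.succ_pos j, by simpa using hq⟩
  · refine Finset.prod_congr rfl fun i _ => ?_
    rw [Fin.cons_succ]
    congr 1
    ext q
    simp only [Finset.mem_biUnion, Finset.mem_filter, Finset.mem_univ, true_and]
    constructor
    · rintro ⟨i', hlt, hq⟩
      rcases Fin.eq_zero_or_eq_succ i' with rfl | ⟨j, rfl⟩
      · exact absurd hlt (by simp [Fin.lt_iff_val_lt_val])
      · exact ⟨j, by simpa [Fin.succ_lt_succ_iff] using hlt, by simpa using hq⟩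
    · rintro ⟨j, hlt, hq⟩
      exact ⟨j.succ, by simpa [Fin.succ_lt_succ_iff] using hlt, by simpa using hq⟩

/-- Block decomposition of an index. -/
def bdec {m n : ℕ} (t : Fin (m * n)) : Fin n × Fin m :=
  (⟨t.val / m, by
      have hm : 0 < m := m_pos_of_mem t
      rw [Nat.div_lt_iff_lt_mul hm, Nat.mul_comm n m]; exact t.isLt⟩,
   ⟨t.val % m, Nat.mod_lt _ (m_pos_of_mem t)⟩)

lemma bdec_idx {m n : ℕ} (i : Fin n) (r : Fin m) : bdec (idx m n i r) = (i, r) :=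
  Prod.ext (Fin.ext (idx_div i r)) (Fin.ext (idx_mod i r))

lemma idx_bdec {m n : ℕ} (t : Fin (m * n)) : idx m n (bdec t).1 (bdec t).2 = t :=
  Fin.ext (by rw [idx_val]; exact Nat.div_add_mod' t.val m)

lemma prod_Tset {m k n : ℕ} (f : Fin k → Fin m → Fin (m * n))
    (hf : ∀ j, Function.Injective (f j)) (g : Fin k × Fin (m * n) → ℚ) :
    ∏ p ∈ Tset m k n f, g p = ∏ j, ∏ r, g (j, f j r) := by
  unfold Tset
  rw [Finset.prod_image]
  · exact Fintype.prod_prod_type' (f := fun j r => g (j, f j r))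
  · rintro ⟨j, r⟩ - ⟨j', r'⟩ - h
    obtain ⟨h1, h2⟩ := Prod.mk.injEq .. ▸ h
    subst h1
    exact Prod.ext rfl (hf j h2)

lemma sigma_phi_inj {m k n : ℕ} (σ : Fin k → Equiv.Perm (Fin (m * n))) (i : Fin n) (j : Fin k) :
    Function.Injective (fun r : Fin m => σ j (idx m n i r)) := fun r r' h =>
  (idx_inj ((σ j).injective h)).2

lemma Tset_phi_disjoint {m k n : ℕ} (σ : Fin k → Equiv.Perm (Fin (m * n)))
    {i i' : Fin n} (h : i ≠ i') :
    Disjoint (Tset m k n (fun j r => σ j (idx m n i r)))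
      (Tset m k n (fun j r => σ j (idx m n i' r))) := by
  rw [Finset.disjoint_left]
  rintro q hq hq'
  simp only [Tset, Finset.mem_image, Finset.mem_univ, true_and] at hq hq'
  obtain ⟨⟨j, r⟩, hp⟩ := hq
  obtain ⟨⟨j', r'⟩, hp'⟩ := hq'
  rw [← hp'] at hp
  obtain ⟨h1, h2⟩ := Prod.mk.injEq .. ▸ hp
  subst h1
  exact h (idx_inj ((σ j).injective h2)).1

lemma gsign_Tset_pair {m k n : ℕ} (hm : Even m) (σ : Fin k → Equiv.Perm (Fin (m * n)))
    (i i' : Fin n) :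
    gsign (Tset m k n fun j r => σ j (idx m n i r)) (Tset m k n fun j r => σ j (idx m n i' r)) =
    ∏ j : Fin k, ∏ r : Fin m, ∏ r' : Fin m,
      (if σ j (idx m n i' r') < σ j (idx m n i r) then (-1 : ℚ) else 1) := by
  rw [gsign_eq_prod]
  rw [prod_Tset _ (sigma_phi_inj σ i)]
  have hin : ∀ p : Fin k × Fin (m * n),
      (∏ q ∈ Tset m k n fun j r => σ j (idx m n i' r), eps p q) =
      ∏ j' : Fin k, ∏ r' : Fin m, eps p (j', σ j' (idx m n i' r')) := fun p =>
    prod_Tset _ (sigma_phi_inj σ i') (eps p)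
  simp only [hin]
  have hswap : (∏ j, ∏ r, ∏ j', ∏ r', eps (j, σ j (idx m n i r)) (j', σ j' (idx m n i' r'))) =
      ∏ j, ∏ j', ∏ r, ∏ r', eps (j, σ j (idx m n i r)) (j', σ j' (idx m n i' r')) :=
    Finset.prod_congr rfl fun j _ =>
      Finset.prod_comm (s := Finset.univ) (t := Finset.univ)
        (f := fun r j' => ∏ r', eps (j, σ j (idx m n i r)) (j', σ j' (idx m n i' r')))
  rw [hswap]
  refine Finset.prod_congr rfl fun j _ => ?_
  refine (Finset.prod_eq_single j (fun j' _ hne => ?_)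
    (fun h => absurd (Finset.mem_univ j) h)).trans ?_
  · -- off-diagonal family blocks contribute 1
    have he : ∀ r r' : Fin m, eps (j, σ j (idx m n i r)) (j', σ j' (idx m n i' r')) =
        if j' < j then (-1 : ℚ) else 1 := by
      intro r r'
      unfold eps GenLt
      by_cases h : j' < j
      · rw [if_pos h]; exact if_pos (Or.inl h)
      · rw [if_neg h]; refine if_neg ?_
        rintro (h' | ⟨h', -⟩)
        · exact h h'
        · exact hne h'
    simp only [he, Finset.prod_const, Finset.card_univ, Fintype.card_fin]
    by_cases h : j' < j
    · rw [if_pos h, hm.neg_one_pow, one_pow]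
    · rw [if_neg h, one_pow, one_pow]
  · refine Finset.prod_congr rfl fun r _ => Finset.prod_congr rfl fun r' _ => ?_
    unfold eps GenLt
    simp [lt_irrefl]

lemma key_prod_sign {m n : ℕ} (τ : Equiv.Perm (Fin (m * n))) (hτ : BlockIncr m n τ) :
    (∏ i : Fin n, ∏ i' ∈ Finset.univ.filter (fun i' => i < i'), ∏ r : Fin m, ∏ r' : Fin m,
      (if τ (idx m n i' r') < τ (idx m n i r) then (-1 : ℚ) else 1)) =
    ((Equiv.Perm.sign τ : ℤ) : ℚ) := by
  rw [sign_eq_prodQ]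
  rw [← Finset.prod_filter_mul_prod_filter_not (Equiv.Perm.finPairsLT (m * n))
    (fun x => x.1.val / m = x.2.val / m)]
  have hsame : (∏ x ∈ (Equiv.Perm.finPairsLT (m * n)).filter
      (fun x => x.1.val / m = x.2.val / m), (if τ x.1 ≤ τ x.2 then (-1 : ℚ) else 1)) = 1 := by
    refine Finset.prod_eq_one fun x hx => ?_
    rw [Finset.mem_filter] at hx
    obtain ⟨hxP, hdiv⟩ := hx
    have h21 : x.2 < x.1 := Equiv.Perm.mem_finPairsLT.1 hxP
    obtain ⟨i1, r1, h1⟩ := idx_surj x.1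
    obtain ⟨i2, r2, h2⟩ := idx_surj x.2
    have hi : i1 = i2 := Fin.ext (by
      rw [← idx_div i1 r1, ← idx_div i2 r2, h1, h2]; exact hdiv)
    subst hi
    have hr : r2 < r1 := by
      have hv : (idx m n i1 r2).val < (idx m n i1 r1).val := by
        rw [h1, h2]; exact h21
      rw [idx_val, idx_val] at hv
      exact Fin.lt_iff_val_lt_val.2 (by omega)
    have hlt : τ x.2 < τ x.1 := by
      rw [← h1, ← h2]; exact hτ i1 r2 r1 hr
    rw [if_neg (not_le.2 hlt)]
  rw [hsame, one_mul]
  -- flatten the quadruple product and establish the bijection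
  have hstep1 : ∀ i : Fin n,
      (∏ i' ∈ Finset.univ.filter (fun i' => i < i'), ∏ r : Fin m, ∏ r' : Fin m,
        (if τ (idx m n i' r') < τ (idx m n i r) then (-1 : ℚ) else 1)) =
      ∏ i' : Fin n, ∏ r : Fin m, ∏ r' : Fin m,
        (if i < i' then (if τ (idx m n i' r') < τ (idx m n i r) then (-1 : ℚ) else 1) else 1) := by
    intro i
    rw [Finset.prod_filter]
    refine Finset.prod_congr rfl fun i' _ => ?_
    split
    · rfl
    · rw [Finset.prod_const_one]
      exact (Finset.prod_const_one).symm
  simp only [hstep1]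
  have hstep2 : (∏ i : Fin n, ∏ i' : Fin n, ∏ r : Fin m, ∏ r' : Fin m,
        (if i < i' then (if τ (idx m n i' r') < τ (idx m n i r) then (-1 : ℚ) else 1) else 1)) =
      ∏ i : Fin n, ∏ r : Fin m, ∏ i' : Fin n, ∏ r' : Fin m,
        (if i < i' then (if τ (idx m n i' r') < τ (idx m n i r) then (-1 : ℚ) else 1) else 1) :=
    Finset.prod_congr rfl fun i _ => Finset.prod_comm
  rw [hstep2]
  set G : (Fin n × Fin m) × (Fin n × Fin m) → ℚ := fun p =>
    if p.1.1 < p.2.1 then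
      (if τ (idx m n p.2.1 p.2.2) < τ (idx m n p.1.1 p.1.2) then (-1 : ℚ) else 1) else 1 with hG
  have e3 : ∀ (i : Fin n) (r : Fin m),
      (∏ q2 : Fin n × Fin m, G ((i, r), q2)) =
      ∏ i' : Fin n, ∏ r' : Fin m,
        (if i < i' then (if τ (idx m n i' r') < τ (idx m n i r) then (-1 : ℚ) else 1) else 1) :=
    fun i r => Fintype.prod_prod_type (f := fun q2 => G ((i, r), q2))
  have e2 : (∏ q1 : Fin n × Fin m, ∏ q2 : Fin n × Fin m, G (q1, q2)) =
      ∏ i : Fin n, ∏ r : Fin m, ∏ q2 : Fin n × Fin m, G ((i, r), q2) :=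
    Fintype.prod_prod_type (f := fun q1 => ∏ q2 : Fin n × Fin m, G (q1, q2))
  have e1 : (∏ p : (Fin n × Fin m) × (Fin n × Fin m), G p) =
      ∏ q1 : Fin n × Fin m, ∏ q2 : Fin n × Fin m, G (q1, q2) :=
    Fintype.prod_prod_type (f := G)
  have eflat : (∏ i : Fin n, ∏ r : Fin m, ∏ i' : Fin n, ∏ r' : Fin m,
        (if i < i' then (if τ (idx m n i' r') < τ (idx m n i r) then (-1 : ℚ) else 1) else 1)) =
      ∏ p : (Fin n × Fin m) × (Fin n × Fin m), G p := by
    rw [e1, e2]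
    exact (Finset.prod_congr rfl fun i _ => Finset.prod_congr rfl fun r _ => (e3 i r).symm)
  rw [eflat]
  have efilt : (∏ p : (Fin n × Fin m) × (Fin n × Fin m), G p) =
      ∏ p ∈ Finset.univ.filter (fun p : (Fin n × Fin m) × (Fin n × Fin m) => p.1.1 < p.2.1),
        (if τ (idx m n p.2.1 p.2.2) < τ (idx m n p.1.1 p.1.2) then (-1 : ℚ) else 1) := by
    rw [Finset.prod_filter]
  rw [efilt]
  refine Finset.prod_nbij'
    (fun p => (⟨idx m n p.2.1 p.2.2, idx m n p.1.1 p.1.2⟩ : Σ _ : Fin (m * n), Fin (m * n)))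
    (fun x => (bdec x.2, bdec x.1)) ?_ ?_ ?_ ?_ ?_
  · rintro ⟨⟨i, r⟩, ⟨i', r'⟩⟩ hp
    rw [Finset.mem_filter] at hp
    have hlt : i < i' := hp.2
    dsimp only
    rw [Finset.mem_filter]
    refine ⟨?_, ?_⟩
    · exact Equiv.Perm.mem_finPairsLT.2 (idx_lt r r' hlt)
    · intro hdiv
      rw [idx_div, idx_div] at hdiv
      exact absurd (Fin.ext hdiv : i' = i) (ne_of_gt hlt)
  · rintro ⟨x1, x2⟩ hx
    rw [Finset.mem_filter] at hx
    obtain ⟨hP, hnsb⟩ := hx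
    dsimp only at hnsb ⊢
    have h21 : x2 < x1 := Equiv.Perm.mem_finPairsLT.1 hP
    rw [Finset.mem_filter]
    refine ⟨Finset.mem_univ _, ?_⟩
    show (bdec x2).1 < (bdec x1).1
    have hle : x2.val / m ≤ x1.val / m := Nat.div_le_div_right (le_of_lt h21)
    have hne : x2.val / m ≠ x1.val / m := fun h => hnsb h.symm
    exact Fin.lt_iff_val_lt_val.2 (lt_of_le_of_ne hle hne)
  · rintro ⟨⟨i, r⟩, ⟨i', r'⟩⟩ -
    show (bdec (idx m n i r), bdec (idx m n i' r')) = _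
    rw [bdec_idx, bdec_idx]
  · rintro ⟨x1, x2⟩ -
    show (⟨idx m n (bdec x1).1 (bdec x1).2, idx m n (bdec x2).1 (bdec x2).2⟩ :
      Σ _ : Fin (m * n), Fin (m * n)) = _
    rw [idx_bdec, idx_bdec]
  · rintro ⟨⟨i, r⟩, ⟨i', r'⟩⟩ hp
    rw [Finset.mem_filter] at hp
    have hlt : i < i' := hp.2
    have hne : τ (idx m n i' r') ≠ τ (idx m n i r) :=
      fun h => absurd (τ.injective h) (ne_of_gt (idx_lt r r' hlt))
    dsimp only
    exact (if_congr (Ne.le_iff_lt hne) rfl rfl).symm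

lemma tailSign_eq {m k n : ℕ} (hm : Even m) (σ : Fin k → Equiv.Perm (Fin (m * n)))
    (hσ : ∀ j, BlockIncr m n (σ j)) :
    tailSign (fun i => Tset m k n (fun j r => σ j (idx m n i r))) =
    ∏ j, ((Equiv.Perm.sign (σ j) : ℤ) : ℚ) := by
  unfold tailSign
  calc (∏ i : Fin n, gsign (Tset m k n fun j r => σ j (idx m n i r))
        ((Finset.univ.filter (fun i' => i < i')).biUnion
          fun i' => Tset m k n fun j r => σ j (idx m n i' r)))
      = ∏ i : Fin n, ∏ i' ∈ Finset.univ.filter (fun i' => i < i'),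
          gsign (Tset m k n fun j r => σ j (idx m n i r))
            (Tset m k n fun j r => σ j (idx m n i' r)) :=
        Finset.prod_congr rfl fun i _ =>
          gsign_biUnion _ _ _ (fun a _ b _ hab => Tset_phi_disjoint σ hab)
    _ = ∏ i : Fin n, ∏ i' ∈ Finset.univ.filter (fun i' => i < i'), ∏ j : Fin k,
          ∏ r : Fin m, ∏ r' : Fin m,
            (if σ j (idx m n i' r') < σ j (idx m n i r) then (-1 : ℚ) else 1) :=
        Finset.prod_congr rfl fun i _ => Finset.prod_congr rfl fun i' _ =>
          gsign_Tset_pair hm σ i i'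
    _ = ∏ i : Fin n, ∏ j : Fin k, ∏ i' ∈ Finset.univ.filter (fun i' => i < i'),
          ∏ r : Fin m, ∏ r' : Fin m,
            (if σ j (idx m n i' r') < σ j (idx m n i r) then (-1 : ℚ) else 1) :=
        Finset.prod_congr rfl fun i _ =>
          Finset.prod_comm (s := Finset.univ.filter (fun i' => i < i')) (t := Finset.univ)
            (f := fun i' j => ∏ r : Fin m, ∏ r' : Fin m,
              (if σ j (idx m n i' r') < σ j (idx m n i r) then (-1 : ℚ) else 1))
    _ = ∏ j : Fin k, ∏ i : Fin n, ∏ i' ∈ Finset.univ.filter (fun i' => i < i'),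
          ∏ r : Fin m, ∏ r' : Fin m,
            (if σ j (idx m n i' r') < σ j (idx m n i r) then (-1 : ℚ) else 1) :=
        Finset.prod_comm (s := Finset.univ) (t := Finset.univ)
          (f := fun i j => ∏ i' ∈ Finset.univ.filter (fun i' => i < i'),
            ∏ r : Fin m, ∏ r' : Fin m,
              (if σ j (idx m n i' r') < σ j (idx m n i r) then (-1 : ℚ) else 1))
    _ = ∏ j, ((Equiv.Perm.sign (σ j) : ℤ) : ℚ) :=
        Finset.prod_congr rfl fun j _ => key_prod_sign (σ j) (hσ j)

/-- The admissibility condition for a sequence of index tuples. -/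
def OmCond (m k n : ℕ) {ℓ : ℕ} (F : Fin ℓ → Fin k → Fin m → Fin (m * n))
    (S : Finset (Fin k × Fin (m * n))) : Prop :=
  (∀ i j, StrictMono (F i j)) ∧
    (∀ i i', i ≠ i' → Disjoint (Tset m k n (F i)) (Tset m k n (F i'))) ∧
    Finset.univ.biUnion (fun i => Tset m k n (F i)) = S

lemma biUnion_cons {a b ℓ : ℕ} (c : Finset (Fin a × Fin b))
    (A : Fin ℓ → Finset (Fin a × Fin b)) :
    Finset.univ.biUnion (Fin.cons c A : Fin (ℓ + 1) → Finset (Fin a × Fin b)) =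
      c ∪ Finset.univ.biUnion A := by
  ext q
  simp only [Finset.mem_biUnion, Finset.mem_union, Finset.mem_univ, true_and]
  constructor
  · rintro ⟨i, hq⟩
    rcases Fin.eq_zero_or_eq_succ i with rfl | ⟨j, rfl⟩
    · exact Or.inl (by simpa using hq)
    · exact Or.inr ⟨j, by simpa using hq⟩
  · rintro (hq | ⟨j, hq⟩)
    · exact ⟨0, by simpa using hq⟩
    · exact ⟨j.succ, by simpa using hq⟩

lemma OmCond_cons_iff {m k n ℓ : ℕ} (f : Fin k → Fin m → Fin (m * n))
    (F' : Fin ℓ → Fin k → Fin m → Fin (m * n)) (S : Finset (Fin k × Fin (m * n))) :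
    OmCond m k n (Fin.cons f F') S ↔
      ((∀ j, StrictMono (f j)) ∧ Tset m k n f ⊆ S ∧
        OmCond m k n F' (S \ Tset m k n f)) := by
  have hfun : (fun i => Tset m k n ((Fin.cons f F' : Fin (ℓ + 1) → Fin k → Fin m → Fin (m * n)) i)) =
      Fin.cons (Tset m k n f) (fun i => Tset m k n (F' i)) := by
    funext i
    induction i using Fin.cases with
    | zero => simp
    | succ i => simp
  constructor
  · rintro ⟨hSM, hdis, hcov⟩
    have hcov' : Tset m k n f ∪ Finset.univ.biUnion (fun i => Tset m k n (F' i)) = S := by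
      rw [← biUnion_cons, ← hfun]
      · exact hcov
    have hdisjU : Disjoint (Tset m k n f) (Finset.univ.biUnion fun i => Tset m k n (F' i)) := by
      rw [Finset.disjoint_biUnion_right]
      intro i _
      have := hdis 0 i.succ (Ne.symm (Fin.succ_ne_zero i))
      rwa [Fin.cons_zero, Fin.cons_succ] at this
    refine ⟨fun j => by simpa using hSM 0 j, ?_, fun i j => by simpa using hSM i.succ j,
      fun i i' hne => ?_, ?_⟩
    · rw [← hcov']
      exact Finset.subset_union_left
    · have := hdis i.succ i'.succ (fun h => hne (Fin.succ_injective _ h))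
      rwa [Fin.cons_succ, Fin.cons_succ] at this
    · rw [← hcov', Finset.union_sdiff_cancel_left hdisjU]
  · rintro ⟨hSMf, hsub, hSM', hdis', hcov'⟩
    have hdisjU : Disjoint (Tset m k n f) (Finset.univ.biUnion fun i => Tset m k n (F' i)) := by
      rw [hcov']
      exact Finset.disjoint_sdiff
    refine ⟨fun i => Fin.cases (by simpa using hSMf) (fun i' => by simpa using hSM' i') i,
      fun i i' hne => ?_, ?_⟩
    · induction i using Fin.cases with
      | zero =>
          induction i' using Fin.cases with
          | zero => exact absurd rfl hne
          | succ i' =>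
              rw [Fin.cons_zero, Fin.cons_succ]
              exact Disjoint.mono_right
                (Finset.subset_biUnion_of_mem (fun i => Tset m k n (F' i))
                  (Finset.mem_univ i')) hdisjU
      | succ i =>
          induction i' using Fin.cases with
          | zero =>
              rw [Fin.cons_zero, Fin.cons_succ]
              exact (Disjoint.mono_right
                (Finset.subset_biUnion_of_mem (fun i => Tset m k n (F' i))
                  (Finset.mem_univ i)) hdisjU).symm
          | succ i' =>
              rw [Fin.cons_succ, Fin.cons_succ]
              exact hdis' i i' (fun h => hne (by rw [h]))
    · rw [hfun, biUnion_cons, hcov', Finset.union_sdiff_of_subset hsub]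

open scoped Classical in
lemma gpow_omega (m k n : ℕ) (M : (Fin k → Fin m → Fin (m * n)) → ℚ) :
    ∀ (ℓ : ℕ) (S : Finset (Fin k × Fin (m * n))),
    gpow (Omega m k n M) ℓ S =
    ∑ F : Fin ℓ → Fin k → Fin m → Fin (m * n),
      if OmCond m k n F S then tailSign (fun i => Tset m k n (F i)) * ∏ i, M (F i) else 0 := by
  intro ℓ
  induction ℓ with
  | zero =>
      intro S
      show (if S = ∅ then (1 : ℚ) else 0) = _
      rw [Finset.univ_unique, Finset.sum_singleton]
      have hcond : OmCond m k n (default : Fin 0 → Fin k → Fin m → Fin (m * n)) S ↔ S = ∅ := by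
        unfold OmCond
        simp [eq_comm]
      have h1 : tailSign (fun i : Fin 0 =>
          Tset m k n ((default : Fin 0 → Fin k → Fin m → Fin (m * n)) i)) = 1 := by
        unfold tailSign
        simp
      rw [h1]
      simp only [hcond]
      split <;> simp
  | succ ℓ ih =>
      intro S
      show gmul (Omega m k n M) (gpow (Omega m k n M) ℓ) S = _
      unfold gmul
      have hΩ : ∀ A, Omega m k n M A = ∑ f : Fin k → Fin m → Fin (m * n),
          if (∀ j, StrictMono (f j)) then (if A = Tset m k n f then M f else 0) else 0 :=
        fun A => Finset.sum_filter _ _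
      calc (∑ A ∈ S.powerset,
            gsign A (S \ A) * Omega m k n M A * gpow (Omega m k n M) ℓ (S \ A))
          = ∑ A ∈ S.powerset, ∑ f : Fin k → Fin m → Fin (m * n),
              (if A = Tset m k n f then
                (if (∀ j, StrictMono (f j)) then
                  gsign A (S \ A) * M f * gpow (Omega m k n M) ℓ (S \ A) else 0) else 0) := by
            refine Finset.sum_congr rfl fun A _ => ?_
            rw [hΩ, Finset.mul_sum, Finset.sum_mul]
            refine Finset.sum_congr rfl fun f _ => ?_
            by_cases h1 : A = Tset m k n f <;> by_cases h2 : (∀ j, StrictMono (f j)) <;>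
              simp [h1, h2] <;> ring
        _ = ∑ f : Fin k → Fin m → Fin (m * n), ∑ A ∈ S.powerset,
              (if A = Tset m k n f then
                (if (∀ j, StrictMono (f j)) then
                  gsign A (S \ A) * M f * gpow (Omega m k n M) ℓ (S \ A) else 0) else 0) :=
            Finset.sum_comm
        _ = ∑ f : Fin k → Fin m → Fin (m * n),
              (if Tset m k n f ⊆ S then
                (if (∀ j, StrictMono (f j)) then
                  gsign (Tset m k n f) (S \ Tset m k n f) * M f *
                    gpow (Omega m k n M) ℓ (S \ Tset m k n f) else 0) else 0) := by
            refine Finset.sum_congr rfl fun f _ => ?_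
            rw [Finset.sum_ite_eq' S.powerset (Tset m k n f)]
            simp only [Finset.mem_powerset]
        _ = ∑ f : Fin k → Fin m → Fin (m * n),
              ∑ F' : Fin ℓ → Fin k → Fin m → Fin (m * n),
              (if Tset m k n f ⊆ S then
                (if (∀ j, StrictMono (f j)) then
                  (if OmCond m k n F' (S \ Tset m k n f) then
                    gsign (Tset m k n f) (S \ Tset m k n f) * M f *
                      (tailSign (fun i => Tset m k n (F' i)) * ∏ i, M (F' i))
                   else 0) else 0) else 0) := by
            refine Finset.sum_congr rfl fun f _ => ?_
            by_cases h1 : Tset m k n f ⊆ S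
            · by_cases h2 : (∀ j, StrictMono (f j))
              · simp only [if_pos h1, if_pos h2, ih (S \ Tset m k n f), Finset.mul_sum]
                refine Finset.sum_congr rfl fun F' _ => ?_
                by_cases h3 : OmCond m k n F' (S \ Tset m k n f) <;> simp [h3]
              · simp [if_neg h2]
            · simp [if_neg h1]
        _ = ∑ F : Fin (ℓ + 1) → Fin k → Fin m → Fin (m * n),
              (if OmCond m k n F S then
                tailSign (fun i => Tset m k n (F i)) * ∏ i, M (F i) else 0) := ?_
      rw [← Equiv.sum_comp (Fin.consEquiv fun _ => (Fin k → Fin m → Fin (m * n)))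
        (fun F => if OmCond m k n F S then
          tailSign (fun i => Tset m k n (F i)) * ∏ i, M (F i) else 0),
        Fintype.sum_prod_type]
      refine Finset.sum_congr rfl fun f _ => Finset.sum_congr rfl fun F' _ => ?_
      have hcons : (Fin.consEquiv fun _ => (Fin k → Fin m → Fin (m * n))) (f, F') =
          Fin.cons f F' := rfl
      rw [hcons]
      have hfun : (fun i => Tset m k n ((Fin.cons f F' : Fin (ℓ + 1) → Fin k → Fin m → Fin (m * n)) i)) =
          Fin.cons (Tset m k n f) (fun i => Tset m k n (F' i)) := by
        funext i
        induction i using Fin.cases with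
        | zero => simp
        | succ i => simp
      by_cases hc : OmCond m k n (Fin.cons f F') S
      · obtain ⟨hSMf, hsub, hc'⟩ := (OmCond_cons_iff f F' S).1 hc
        rw [if_pos hsub, if_pos hSMf, if_pos hc', if_pos hc]
        have hprodM : (∏ i : Fin (ℓ + 1),
            M ((Fin.cons f F' : Fin (ℓ + 1) → Fin k → Fin m → Fin (m * n)) i)) =
            M f * ∏ i, M (F' i) := by
          rw [Fin.prod_univ_succ, Fin.cons_zero]
          simp only [Fin.cons_succ]
        have hTS : tailSign (fun i =>
            Tset m k n ((Fin.cons f F' : Fin (ℓ + 1) → Fin k → Fin m → Fin (m * n)) i)) =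
            gsign (Tset m k n f) (S \ Tset m k n f) * tailSign (fun i => Tset m k n (F' i)) := by
          rw [hfun, tailSign_cons, hc'.2.2]
        rw [hTS, hprodM]
        ring
      · rw [if_neg hc]
        by_cases h1 : Tset m k n f ⊆ S
        · by_cases h2 : (∀ j, StrictMono (f j))
          · rw [if_pos h1, if_pos h2, if_neg
              (fun h3 => hc ((OmCond_cons_iff f F' S).2 ⟨h2, h1, h3⟩))]
          · rw [if_pos h1, if_neg h2]
        · rw [if_neg h1]

end Aux

/-- Berezin integral representation of the generalized pfaffian: extracting the
coefficient of the top Grassmann monomial (the Berezin integral over all variables of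
all `k` families) in `Ω_m(M)^n / n!` yields `Pf_m(M)` (assume `m` even so that the `k`
families of Grassmann variables mutually commute). -/
theorem berezin_top_eq_pf (m k n : ℕ) (hm : Even m)
    (M : (Fin k → Fin m → Fin (m * n)) → ℚ) :
    (n.factorial : ℚ)⁻¹ * gpow (Omega m k n M) n Finset.univ = Pf m k n M := by
  classical
  rw [gpow_omega m k n M n Finset.univ]
  unfold Pf
  congr 1
  rw [← Finset.sum_filter]
  refine (Finset.sum_nbij
    (i := fun (σ : Fin k → Equiv.Perm (Fin (m * n))) =>
      (fun i j r => σ j (idx m n i r) : Fin n → Fin k → Fin m → Fin (m * n)))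
    ?_ ?_ ?_ ?_).symm
  · -- membership
    intro σ hσ'
    rw [Finset.mem_filter] at hσ'
    obtain ⟨-, hb⟩ := hσ'
    rw [Finset.mem_filter]
    refine ⟨Finset.mem_univ _, fun i j r r' hrr' => hb j i r r' hrr',
      fun i i' hne => Tset_phi_disjoint σ hne, ?_⟩
    apply Finset.eq_univ_iff_forall.2
    rintro ⟨j, v⟩
    obtain ⟨i, r, hir⟩ := idx_surj ((σ j).symm v)
    refine Finset.mem_biUnion.2 ⟨i, Finset.mem_univ _, ?_⟩
    refine Finset.mem_image.2 ⟨(j, r), Finset.mem_univ _, ?_⟩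
    dsimp only
    rw [hir]
    simp
  · -- injectivity
    intro σ _ σ' _ h
    funext j
    apply Equiv.ext
    intro t
    obtain ⟨i, r, rfl⟩ := idx_surj t
    exact congrFun (congrFun (congrFun h i) j) r
  · -- surjectivity
    intro F hF
    rw [Finset.mem_coe, Finset.mem_filter] at hF
    obtain ⟨-, hSM, hdis, hcov⟩ := hF
    have heinj : ∀ j, Function.Injective (fun p : Fin n × Fin m => F p.1 j p.2) := by
      intro j p p' h
      dsimp only at h
      have hip : p.1 = p'.1 := by
        by_contra hne
        have hd := hdis p.1 p'.1 hne
        have h1 : (j, F p.1 j p.2) ∈ Tset m k n (F p.1) :=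
          Finset.mem_image.2 ⟨(j, p.2), Finset.mem_univ _, rfl⟩
        have h2 : (j, F p.1 j p.2) ∈ Tset m k n (F p'.1) := by
          rw [show F p.1 j p.2 = F p'.1 j p'.2 from h]
          exact Finset.mem_image.2 ⟨(j, p'.2), Finset.mem_univ _, rfl⟩
        exact Finset.disjoint_left.1 hd h1 h2
      rw [← hip] at h
      exact Prod.ext hip ((hSM p.1 j).injective h)
    have hbij : ∀ j, Function.Bijective (fun p : Fin n × Fin m => F p.1 j p.2) := fun j =>
      (Fintype.bijective_iff_injective_and_card _).2 ⟨heinj j, by simp [mul_comm]⟩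
    have hdbij : Function.Bijective (fun p : Fin n × Fin m => idx m n p.1 p.2) := by
      refine (Fintype.bijective_iff_injective_and_card _).2 ⟨?_, by simp [mul_comm]⟩
      intro p p' h
      exact Prod.ext (idx_inj h).1 (idx_inj h).2
    set σ : Fin k → Equiv.Perm (Fin (m * n)) := fun j =>
      (Equiv.ofBijective _ hdbij).symm.trans (Equiv.ofBijective _ (hbij j)) with hσdef
    have key : ∀ j i r, σ j (idx m n i r) = F i j r := by
      intro j i r
      have hsymm : (Equiv.ofBijective _ hdbij).symm (idx m n i r) = (i, r) := by
        rw [Equiv.symm_apply_eq]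
        rfl
      show (Equiv.ofBijective _ (hbij j)) ((Equiv.ofBijective _ hdbij).symm (idx m n i r)) = _
      rw [hsymm]
      rfl
    refine ⟨σ, ?_, ?_⟩
    · rw [Finset.mem_coe, Finset.mem_filter]
      refine ⟨Finset.mem_univ _, fun j i r r' hrr' => ?_⟩
      rw [key, key]
      exact hSM i j hrr'
    · funext i j r
      exact key j i r
  · -- values
    intro σ hσ'
    rw [Finset.mem_filter] at hσ'
    rw [tailSign_eq hm σ hσ'.2]
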